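/- For every t ∈ ℝ, the limit as s → 0 (s ≠ 0) of G^B_{n_y τ_y τ_y}(γ(t), γ(t+s)) equals −κ(t)/(8π), where for x ≠ γ(s′) one defines G^B_{n_y τ_y τ_y}(x, γ(s′)) = (1/(2π))·(r·n(s′))·(r·τ(s′))²/‖r‖⁴ − (1/(4π))·(r·n(s′))/‖r‖² with r = x − γ(s′); this function is the mixed third directional derivative of y ↦ G^B(x,y) once in direction n(s′) and twice in direction τ(s′). -/

import Mathlib

open Real Filter Topology MeasureTheory

noncomputable section

/-- Euclidean dot product on `ℝ × ℝ`. -/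
def dot2 (v w : ℝ × ℝ) : ℝ := v.1 * w.1 + v.2 * w.2

/-- Unit tangent vector `τ(s) = γ′(s)`. -/
def tang (γ : ℝ → ℝ × ℝ) (s : ℝ) : ℝ × ℝ := deriv γ s

/-- Unit normal vector `n(s) = (τ₂(s), −τ₁(s))`. -/
def nor (γ : ℝ → ℝ × ℝ) (s : ℝ) : ℝ × ℝ := ((deriv γ s).2, -(deriv γ s).1)

/-- Signed curvature `κ(s) = −γ″(s)·n(s)`. -/
def curv (γ : ℝ → ℝ × ℝ) (s : ℝ) : ℝ := -(dot2 (deriv (deriv γ) s) (nor γ s))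

/-- Explicit formula for `G^B_{n_y τ_y τ_y}(x, γ(s'))`, with `r = x − γ(s')`. -/
def GB_ny_ty_ty (γ : ℝ → ℝ × ℝ) (x : ℝ × ℝ) (s' : ℝ) : ℝ :=
  1 / (2 * π) * dot2 (x - γ s') (nor γ s') * (dot2 (x - γ s') (tang γ s')) ^ 2
      / (dot2 (x - γ s') (x - γ s')) ^ 2
    - 1 / (4 * π) * dot2 (x - γ s') (nor γ s') / dot2 (x - γ s') (x - γ s')

lemma aux_alg (A B C s p q : ℝ) (hs : s ≠ 0) :
    p * (A/s^2 * (B/s)^2 / (C/s^2)^2) - q * (A/s^2 / (C/s^2)) = p * A * B^2 / C^2 - q * A / C := by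
  by_cases hC : C = 0
  · simp [hC]
  · field_simp

lemma aux_shift (t : ℝ) : Tendsto (fun s : ℝ => t + s) (𝓝[≠] (0:ℝ)) (𝓝[≠] t) := by
  apply tendsto_nhdsWithin_of_tendsto_nhds_of_eventually_within (s := {t}ᶜ)
  · have : Tendsto (fun s : ℝ => t + s) (𝓝 0) (𝓝 t) := by
      simpa using (continuous_add_left t).tendsto (0:ℝ)
    exact this.mono_left nhdsWithin_le_nhds
  · filter_upwards [self_mem_nhdsWithin] with s hs
    simp only [Set.mem_compl_iff, Set.mem_singleton_iff] at *
    intro h; exact hs (by linarith)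

lemma aux_cont (f : ℝ → ℝ) (hf : Continuous f) (t : ℝ) :
    Tendsto (fun s => f (t + s)) (𝓝[≠] (0:ℝ)) (𝓝 (f t)) :=
  (hf.tendsto t).comp ((aux_shift t).mono_right nhdsWithin_le_nhds)

lemma aux_slope (P : ℝ → ℝ) (hP : Differentiable ℝ P) (t : ℝ) :
    Tendsto (fun s => (P t - P (t + s)) / s) (𝓝[≠] (0:ℝ)) (𝓝 (-(deriv P t))) := by
  have h := (hasDerivAt_iff_tendsto_slope.mp (hP t).hasDerivAt).comp (aux_shift t)
  have h2 := h.neg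
  refine h2.congr fun s => ?_
  simp [slope, Function.comp, div_eq_inv_mul]
  ring

theorem stmt1 (L : ℝ) (hL : 0 < L) (γ : ℝ → ℝ × ℝ)
    (hγ : ContDiff ℝ (⊤ : ℕ∞) γ)
    (hper : ∀ s, γ (s + L) = γ s)
    (hinj : Set.InjOn γ (Set.Ico 0 L))
    (harc : ∀ s, dot2 (deriv γ s) (deriv γ s) = 1)
    (t : ℝ) :
    Tendsto (fun s : ℝ => GB_ny_ty_ty γ (γ t) (t + s)) (𝓝[≠] (0 : ℝ))
      (𝓝 (-(curv γ t) / (8 * π))) := by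
  have hπ : (π:ℝ) ≠ 0 := Real.pi_ne_zero
  set P : ℝ → ℝ := fun s => (γ s).1 with hPdef
  set Q : ℝ → ℝ := fun s => (γ s).2 with hQdef
  have hP : ContDiff ℝ (⊤:ℕ∞) P := hγ.fst
  have hQ : ContDiff ℝ (⊤:ℕ∞) Q := hγ.snd
  have hP1 : Differentiable ℝ P := hP.differentiable (by simp)
  have hQ1 : Differentiable ℝ Q := hQ.differentiable (by simp)
  have hP' : ContDiff ℝ (⊤:ℕ∞) (deriv P) := (contDiff_infty_iff_deriv.mp hP).2
  have hQ' : ContDiff ℝ (⊤:ℕ∞) (deriv Q) := (contDiff_infty_iff_deriv.mp hQ).2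
  have hP'1 : Differentiable ℝ (deriv P) := hP'.differentiable (by simp)
  have hQ'1 : Differentiable ℝ (deriv Q) := hQ'.differentiable (by simp)
  have hP''c : Continuous (deriv (deriv P)) := ((contDiff_infty_iff_deriv.mp hP').2).continuous
  have hQ''c : Continuous (deriv (deriv Q)) := ((contDiff_infty_iff_deriv.mp hQ').2).continuous
  -- deriv γ in components
  have hγd : ∀ s, deriv γ s = (deriv P s, deriv Q s) := by
    intro s
    exact (((hP1 s).hasDerivAt).prodMk ((hQ1 s).hasDerivAt)).deriv
  have hγdfun : deriv γ = fun s => (deriv P s, deriv Q s) := funext hγd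
  have hγdd : deriv (deriv γ) t = (deriv (deriv P) t, deriv (deriv Q) t) := by
    rw [hγdfun]
    exact (((hP'1 t).hasDerivAt).prodMk ((hQ'1 t).hasDerivAt)).deriv
  -- curvature in components
  have hκ : curv γ t = deriv P t * deriv (deriv Q) t - deriv Q t * deriv (deriv P) t := by
    simp only [curv, dot2, nor, hγdd, hγd]
    ring
  -- arclength in components
  have harct : (deriv P t)^2 + (deriv Q t)^2 = 1 := by
    have := harc t
    rw [hγd t] at this
    simp only [dot2] at this
    nlinarith [this]
  -- scalar functions
  set a : ℝ → ℝ := fun s =>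
    (P t - P (t + s)) * deriv Q (t + s) - (Q t - Q (t + s)) * deriv P (t + s) with ha_def
  set b : ℝ → ℝ := fun s =>
    (P t - P (t + s)) * deriv P (t + s) + (Q t - Q (t + s)) * deriv Q (t + s) with hb_def
  set c : ℝ → ℝ := fun s =>
    (P t - P (t + s))^2 + (Q t - Q (t + s))^2 with hc_def
  -- slope limits
  have hsP := aux_slope P hP1 t
  have hsQ := aux_slope Q hQ1 t
  have hcP' := aux_cont (deriv P) hP'.continuous t
  have hcQ' := aux_cont (deriv Q) hQ'.continuous t
  have hcP'' := aux_cont (deriv (deriv P)) hP''c t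
  have hcQ'' := aux_cont (deriv (deriv Q)) hQ''c t
  -- limit of b s / s
  have hb : Tendsto (fun s => b s / s) (𝓝[≠] (0:ℝ)) (𝓝 (-1)) := by
    have h := (hsP.mul hcP').add (hsQ.mul hcQ')
    have hval : -(deriv P t) * deriv P t + -(deriv Q t) * deriv Q t = -1 := by nlinarith [harct]
    rw [hval] at h
    refine h.congr' ?_
    filter_upwards [self_mem_nhdsWithin] with s hs
    have hs' : s ≠ 0 := hs
    simp only [hb_def]
    field_simp
  -- limit of c s / s^2
  have hc : Tendsto (fun s => c s / s^2) (𝓝[≠] (0:ℝ)) (𝓝 1) := by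
    have h := (hsP.mul hsP).add (hsQ.mul hsQ)
    have hval : -(deriv P t) * -(deriv P t) + -(deriv Q t) * -(deriv Q t) = 1 := by nlinarith [harct]
    rw [hval] at h
    refine h.congr' ?_
    filter_upwards [self_mem_nhdsWithin] with s hs
    have hs' : s ≠ 0 := hs
    simp only [hc_def]
    field_simp
  -- derivative of a
  have hPs : ∀ s : ℝ, HasDerivAt (fun s => P (t + s)) (deriv P (t + s)) s := by
    intro s
    have := ((hP1 (t + s)).hasDerivAt).comp s ((hasDerivAt_id s).const_add t)
    simpa [Function.comp_def] using this
  have hQs : ∀ s : ℝ, HasDerivAt (fun s => Q (t + s)) (deriv Q (t + s)) s := by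
    intro s
    have := ((hQ1 (t + s)).hasDerivAt).comp s ((hasDerivAt_id s).const_add t)
    simpa [Function.comp_def] using this
  have hP's : ∀ s : ℝ, HasDerivAt (fun s => deriv P (t + s)) (deriv (deriv P) (t + s)) s := by
    intro s
    have := ((hP'1 (t + s)).hasDerivAt).comp s ((hasDerivAt_id s).const_add t)
    simpa [Function.comp_def] using this
  have hQ's : ∀ s : ℝ, HasDerivAt (fun s => deriv Q (t + s)) (deriv (deriv Q) (t + s)) s := by
    intro s
    have := ((hQ'1 (t + s)).hasDerivAt).comp s ((hasDerivAt_id s).const_add t)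
    simpa [Function.comp_def] using this
  have haD : ∀ s : ℝ, HasDerivAt a
      ((P t - P (t + s)) * deriv (deriv Q) (t + s)
        - (Q t - Q (t + s)) * deriv (deriv P) (t + s)) s := by
    intro s
    have h1 := (((hasDerivAt_const s (P t)).sub (hPs s)).mul (hQ's s)).sub
      (((hasDerivAt_const s (Q t)).sub (hQs s)).mul (hP's s))
    exact h1.congr_deriv (by simp only [Pi.sub_apply]; ring)
  -- limit of a s / s^2 via L'Hôpital
  have ha : Tendsto (fun s => a s / s^2) (𝓝[≠] (0:ℝ)) (𝓝 (-(curv γ t)/2)) := by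
    apply HasDerivAt.lhopital_zero_nhdsNE
      (f' := fun s => (P t - P (t + s)) * deriv (deriv Q) (t + s)
        - (Q t - Q (t + s)) * deriv (deriv P) (t + s))
      (g' := fun s => 2 * s)
    · filter_upwards with s; exact haD s
    · filter_upwards with s
      have := hasDerivAt_pow 2 s
      simpa using this
    · filter_upwards [self_mem_nhdsWithin] with s hs
      have hs' : s ≠ 0 := hs
      simp [hs']
    · -- a tends to 0
      have hca : Continuous a := by
        apply Continuous.sub
        · exact (continuous_const.sub (hP.continuous.comp (continuous_const.add continuous_id))).mul
            (hQ'.continuous.comp (continuous_const.add continuous_id))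
        · exact (continuous_const.sub (hQ.continuous.comp (continuous_const.add continuous_id))).mul
            (hP'.continuous.comp (continuous_const.add continuous_id))
      have ha0 : a 0 = 0 := by simp [ha_def]
      have := (hca.tendsto 0).mono_left (nhdsWithin_le_nhds (s := {(0:ℝ)}ᶜ))
      rwa [ha0] at this
    · have : Tendsto (fun s : ℝ => s^2) (𝓝 (0:ℝ)) (𝓝 ((0:ℝ)^2)) := (continuous_pow 2).tendsto 0
      simpa using this.mono_left (nhdsWithin_le_nhds (s := {(0:ℝ)}ᶜ))
    · -- ratio of derivatives
      have h := (hsP.mul hcQ'').sub (hsQ.mul hcP'')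
      have h2 := h.const_mul (1/2 : ℝ)
      have hval : (1/2 : ℝ) * (-(deriv P t) * deriv (deriv Q) t - -(deriv Q t) * deriv (deriv P) t)
          = -(curv γ t)/2 := by rw [hκ]; ring
      rw [hval] at h2
      refine h2.congr' ?_
      filter_upwards [self_mem_nhdsWithin] with s hs
      have hs' : s ≠ 0 := hs
      field_simp
  -- combine
  have hmain : Tendsto (fun s =>
      1/(2*π) * (a s/s^2 * (b s/s)^2 / (c s/s^2)^2) - 1/(4*π) * (a s/s^2 / (c s/s^2)))
      (𝓝[≠] (0:ℝ))
      (𝓝 (1/(2*π) * ((-(curv γ t)/2) * (-1:ℝ)^2 / (1:ℝ)^2) - 1/(4*π) * ((-(curv γ t)/2)/1))) := by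
    exact Tendsto.sub
      (Tendsto.const_mul _ ((ha.mul (hb.pow 2)).div (hc.pow 2) (by norm_num)))
      (Tendsto.const_mul _ (ha.div hc one_ne_zero))
  have hval : (1/(2*π) * ((-(curv γ t)/2) * (-1:ℝ)^2 / (1:ℝ)^2) - 1/(4*π) * ((-(curv γ t)/2)/1))
      = -(curv γ t) / (8*π) := by field_simp; ring
  rw [hval] at hmain
  refine hmain.congr' ?_
  filter_upwards [self_mem_nhdsWithin] with s hs
  have hs' : s ≠ 0 := hs
  have hGB : GB_ny_ty_ty γ (γ t) (t + s)
      = 1/(2*π) * a s * (b s)^2 / (c s)^2 - 1/(4*π) * a s / c s := by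
    simp only [GB_ny_ty_ty, dot2, nor, tang, hγd, Prod.fst_sub, Prod.snd_sub,
      ha_def, hb_def, hc_def]
    ring
  rw [hGB]
  exact aux_alg (a s) (b s) (c s) s _ _ hs'
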